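/- arXiv:2104.11126 — 3 statements merged into one kernel-verified Lean document; each statement's English description precedes it below -/
import Mathlib

section
/- Let γ∈ℝ, β≠0, θ>0 and δ_c>0. Suppose (δ,η) is a regular solution of the polytropic static system on [0,R) with R<∞, δ(0)=η(0)=δ_c, satisfying 0<δ(r)<η(r)≤δ_c and η'(r)<0 for all r∈(0,R), and suppose the solution is maximal, i.e., there is no R′>R and regular solution on [0,R′) extending (δ,η). Then lim_{r→R⁻}δ(r)=0 and lim_{r→R⁻}η(r)=(3/R³)∫₀^R δ(s)s² ds > 0. -/
open Real Set Filter Topology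

noncomputable section

/-- `B(y) = (y + (β−1)y^{1+β} − βy^β)/(β(β−1))` for `β ≠ 1`, and
`B(y) = y(y − log y − 1)` for `β = 1`. -/
def Bfun (β y : ℝ) : ℝ :=
  if β = 1 then y * (y - Real.log y - 1)
  else (y + (β - 1) * y ^ (1 + β) - β * y ^ β) / (β * (β - 1))

/-- The right-hand side of the polytropic static equation
`δ' = (δ/η)^{1−β}(3(β−γ)B(δ/η)η/r − θ r η^{2−γ} δ)`. -/
def polyRHS (γ β θ d e r : ℝ) : ℝ :=
  (d / e) ^ (1 - β) * (3 * (β - γ) * Bfun β (d / e) * e / r - θ * r * e ^ (2 - γ) * d)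

/-- `η(r) = (3/r³) ∫₀ʳ δ(s) s² ds`. -/
def polyEta (δ : ℝ → ℝ) (r : ℝ) : ℝ := 3 / r ^ 3 * ∫ s in (0:ℝ)..r, δ s * s ^ 2

/-- A regular solution of the polytropic static system on `[0,R)`:
`δ ∈ C⁰([0,R)) ∩ C¹((0,R))`, `δ > 0` on `[0,R)`, with `η(r) = (3/r³)∫₀ʳ δ(s)s² ds`,
`η(0) = δ(0)`, satisfying the static equation on `(0,R)`. -/
def IsRegularPoly (γ β θ R : ℝ) (δ η : ℝ → ℝ) : Prop :=
  ContinuousOn δ (Ico 0 R) ∧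
  (∀ r ∈ Ioo 0 R, DifferentiableAt ℝ δ r) ∧
  ContinuousOn (deriv δ) (Ioo 0 R) ∧
  (∀ r ∈ Ico 0 R, 0 < δ r) ∧
  η 0 = δ 0 ∧
  (∀ r ∈ Ioo 0 R, η r = polyEta δ r) ∧
  (∀ r ∈ Ioo 0 R, deriv δ r = polyRHS γ β θ (δ r) (η r) r)

/-- A strongly regular solution: regular, `δ ∈ C¹([0,R))` with `δ'(0) = 0` and
`δ'(r) → 0` as `r → 0⁺`. -/
def IsStronglyRegularPoly (γ β θ R : ℝ) (δ η : ℝ → ℝ) : Prop :=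
  IsRegularPoly γ β θ R δ η ∧
  HasDerivWithinAt δ 0 (Ico 0 R) 0 ∧
  Tendsto (deriv δ) (𝓝[>] 0) (𝓝 0)

/-- A regular solution of the polytropic static system on `[0,∞)`. -/
def IsRegularPolyGlobal (γ β θ : ℝ) (δ η : ℝ → ℝ) : Prop :=
  ContinuousOn δ (Ici 0) ∧
  (∀ r ∈ Ioi (0:ℝ), DifferentiableAt ℝ δ r) ∧
  ContinuousOn (deriv δ) (Ioi 0) ∧
  (∀ r ∈ Ici (0:ℝ), 0 < δ r) ∧
  η 0 = δ 0 ∧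
  (∀ r ∈ Ioi (0:ℝ), η r = polyEta δ r) ∧
  (∀ r ∈ Ioi (0:ℝ), deriv δ r = polyRHS γ β θ (δ r) (η r) r)

/-- A strongly regular solution of the polytropic static system on `[0,∞)`. -/
def IsStronglyRegularPolyGlobal (γ β θ : ℝ) (δ η : ℝ → ℝ) : Prop :=
  IsRegularPolyGlobal γ β θ δ η ∧
  HasDerivWithinAt δ 0 (Ici 0) 0 ∧
  Tendsto (deriv δ) (𝓝[>] 0) (𝓝 0)

open MeasureTheory intervalIntegral

lemma contDiffAt_Bfun (β : ℝ) {y : ℝ} (hy : 0 < y) : ContDiffAt ℝ 1 (Bfun β) y := by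
  by_cases hβ : β = 1
  · have hB : Bfun β = fun y : ℝ => y * (y - Real.log y - 1) := by
      funext z; simp [Bfun, hβ]
    rw [hB]
    exact contDiffAt_id.mul ((contDiffAt_id.sub (Real.contDiffAt_log.2 hy.ne')).sub contDiffAt_const)
  · have hB : Bfun β = fun y : ℝ => (y + (β - 1) * y ^ (1 + β) - β * y ^ β) / (β * (β - 1)) := by
      funext z; simp [Bfun, hβ]
    rw [hB]
    apply ContDiffAt.div_const
    exact (contDiffAt_id.add (contDiffAt_const.mul
        (Real.contDiffAt_rpow_const_of_ne hy.ne'))).sub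
      (contDiffAt_const.mul (Real.contDiffAt_rpow_const_of_ne hy.ne'))

lemma contDiffAt_polyRHS (γ β θ : ℝ) {x : ℝ × ℝ × ℝ} (hd : 0 < x.1) (he : 0 < x.2.1)
    (hr : x.2.2 ≠ 0) :
    ContDiffAt ℝ 1 (fun x : ℝ × ℝ × ℝ => polyRHS γ β θ x.1 x.2.1 x.2.2) x := by
  obtain ⟨d, e, r⟩ := x
  simp only at hd he hr
  have h1 : ContDiffAt ℝ 1 (fun x : ℝ × ℝ × ℝ => x.1) (d, e, r) := contDiffAt_fst
  have h2 : ContDiffAt ℝ 1 (fun x : ℝ × ℝ × ℝ => x.2.1) (d, e, r) := contDiffAt_snd.fst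
  have h3 : ContDiffAt ℝ 1 (fun x : ℝ × ℝ × ℝ => x.2.2) (d, e, r) := contDiffAt_snd.snd
  have hq : ContDiffAt ℝ 1 (fun x : ℝ × ℝ × ℝ => x.1 / x.2.1) (d, e, r) := h1.div h2 he.ne'
  have hde : (0:ℝ) < d / e := div_pos hd he
  have hpow : ContDiffAt ℝ 1 (fun x : ℝ × ℝ × ℝ => (x.1 / x.2.1) ^ (1 - β)) (d, e, r) := by
    have := ContDiffAt.comp ((d, e, r) : ℝ × ℝ × ℝ)
      (Real.contDiffAt_rpow_const_of_ne (p := 1 - β) hde.ne') hq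
    exact this
  have hB : ContDiffAt ℝ 1 (fun x : ℝ × ℝ × ℝ => Bfun β (x.1 / x.2.1)) (d, e, r) := by
    have := ContDiffAt.comp ((d, e, r) : ℝ × ℝ × ℝ) (contDiffAt_Bfun β hde) hq
    exact this
  have hepow : ContDiffAt ℝ 1 (fun x : ℝ × ℝ × ℝ => x.2.1 ^ (2 - γ)) (d, e, r) := by
    have := ContDiffAt.comp ((d, e, r) : ℝ × ℝ × ℝ)
      (Real.contDiffAt_rpow_const_of_ne (p := 2 - γ) he.ne') h2
    exact this
  unfold polyRHS
  exact hpow.mul (((((contDiffAt_const.mul hB).mul h2).div h3 hr)).sub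
    (((contDiffAt_const.mul h3).mul hepow).mul h1))

lemma exists_local_sol (γ β θ R L M : ℝ) (hR : 0 < R) (hL : 0 < L) (hM : 0 < M) :
    ∃ (p q : ℝ → ℝ) (ε : ℝ), 0 < ε ∧ p R = L ∧ q R = M ∧
      ∀ t ∈ Ioo (R - ε) (R + ε),
        HasDerivAt p (polyRHS γ β θ (p t) (3 * q t / t ^ 3) t) t ∧
        HasDerivAt q (p t * t ^ 2) t := by
  set W : ℝ × ℝ × ℝ → ℝ × ℝ × ℝ :=
    fun x => (1, polyRHS γ β θ x.2.1 (3 * x.2.2 / x.1 ^ 3) x.1, x.2.1 * x.1 ^ 2) with hW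
  have hWc : ContDiffAt ℝ 1 W (R, L, M) := by
    apply ContDiffAt.prodMk contDiffAt_const
    apply ContDiffAt.prodMk
    · have hh : ContDiffAt ℝ 1
          (fun x : ℝ × ℝ × ℝ => ((x.2.1, 3 * x.2.2 / x.1 ^ 3, x.1) : ℝ × ℝ × ℝ)) (R, L, M) := by
        refine ContDiffAt.prodMk contDiffAt_snd.fst (ContDiffAt.prodMk ?_ contDiffAt_fst)
        exact (contDiffAt_const.mul contDiffAt_snd.snd).div (contDiffAt_fst.pow 3)
          (by positivity)
      have hg : ContDiffAt ℝ 1 (fun x : ℝ × ℝ × ℝ => polyRHS γ β θ x.1 x.2.1 x.2.2)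
          ((L, 3 * M / R ^ 3, R) : ℝ × ℝ × ℝ) :=
        contDiffAt_polyRHS γ β θ (by simpa using hL) (by simp; positivity) (by simpa using hR.ne')
      have := hg.comp ((R, L, M) : ℝ × ℝ × ℝ) hh
      exact this
    · exact contDiffAt_snd.fst.mul (contDiffAt_fst.pow 2)
  obtain ⟨f, hf0, ε, hε, hf⟩ := hWc.exists_forall_mem_closedBall_exists_eq_forall_mem_Ioo_hasDerivAt₀ R
  have hu : ∀ t ∈ Ioo (R - ε) (R + ε), (f t).1 = t := by
    intro t ht
    have hg : ∀ s ∈ Ioo (R - ε) (R + ε), HasDerivAt (fun s => (f s).1 - s) 0 s := by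
      intro s hs
      have h1 : HasDerivAt (fun x => (f x).1) 1 s := by
        simpa [hW, Function.comp_def] using
          (ContinuousLinearMap.fst ℝ ℝ (ℝ × ℝ)).hasFDerivAt.comp_hasDerivAt s (hf s hs)
      have h := h1.sub (hasDerivAt_id' s)
      rw [sub_self] at h
      exact h
    have key : ∀ a b : ℝ, a ∈ Ioo (R - ε) (R + ε) → b ∈ Ioo (R - ε) (R + ε) → a ≤ b →
        (f b).1 - b = (f a).1 - a := by
      intro a b ha hb hab
      have hcont : ContinuousOn (fun s => (f s).1 - s) (Icc a b) := by
        intro s hs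
        exact ((hg s ⟨lt_of_lt_of_le ha.1 hs.1, lt_of_le_of_lt hs.2 hb.2⟩).continuousAt).continuousWithinAt
      have := constant_of_has_deriv_right_zero hcont (fun x hx =>
        (hg x ⟨lt_of_lt_of_le ha.1 hx.1, hx.2.trans hb.2⟩).hasDerivWithinAt)
      exact this b (right_mem_Icc.2 hab)
    have hRmem : R ∈ Ioo (R - ε) (R + ε) := by constructor <;> linarith
    rcases le_total t R with h | h
    · have := key t R ht hRmem h
      rw [hf0] at this; simp at this; linarith [this]
    · have := key R t hRmem ht h
      rw [hf0] at this; simp at this; linarith [this]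
  refine ⟨fun t => (f t).2.1, fun t => (f t).2.2, ε, hε,
    by show (f R).2.1 = L; rw [hf0], by show (f R).2.2 = M; rw [hf0], ?_⟩
  intro t ht
  constructor
  · have := (ContinuousLinearMap.fst ℝ ℝ ℝ ∘L ContinuousLinearMap.snd ℝ ℝ (ℝ × ℝ)).hasFDerivAt.comp_hasDerivAt t (hf t ht)
    simpa [hW, hu t ht, Function.comp_def] using this
  · have := (ContinuousLinearMap.snd ℝ ℝ ℝ ∘L ContinuousLinearMap.snd ℝ ℝ (ℝ × ℝ)).hasFDerivAt.comp_hasDerivAt t (hf t ht)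
    simpa [hW, hu t ht, Function.comp_def] using this

lemma intervalIntegrable_of_bdd_contOn {f : ℝ → ℝ} {a b C : ℝ} (hab : a ≤ b)
    (hc : ContinuousOn f (Ioo a b)) (hbd : ∀ x ∈ Ioo a b, |f x| ≤ C) :
    IntervalIntegrable f volume a b := by
  rw [intervalIntegrable_iff, uIoc_of_le hab]
  have h1 : IntegrableOn f (Ioo a b) volume := by
    have hm : AEStronglyMeasurable f (volume.restrict (Ioo a b)) :=
      (hc.aemeasurable measurableSet_Ioo).aestronglyMeasurable
    have : IsFiniteMeasure (volume.restrict (Ioo a b)) :=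
      ⟨by rw [Measure.restrict_apply_univ]; exact measure_Ioo_lt_top⟩
    refine ⟨hm, HasFiniteIntegral.of_bounded (C := C) ?_⟩
    filter_upwards [ae_restrict_mem measurableSet_Ioo] with x hx
    exact hbd x hx
  exact h1.congr_set_ae Ioo_ae_eq_Ioc.symm

lemma tendsto_intervalIntegral_left_of_bdd {f : ℝ → ℝ} {a b C : ℝ} (hab : a < b)
    (hc : ContinuousOn f (Ioo a b)) (hbd : ∀ x ∈ Ioo a b, |f x| ≤ C) :
    Tendsto (fun r => ∫ x in a..r, f x) (𝓝[<] b) (𝓝 (∫ x in a..b, f x)) := by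
  rw [← tendsto_sub_nhds_zero_iff]
  refine squeeze_zero_norm' (a := fun r => C * (b - r)) ?_ ?_
  · filter_upwards [Ioo_mem_nhdsLT_of_mem (⟨hab, le_refl b⟩ : b ∈ Ioc a b),
      eventually_mem_nhdsWithin] with r hr _
    have h1 : IntervalIntegrable f volume a r :=
      intervalIntegrable_of_bdd_contOn hr.1.le (hc.mono (Ioo_subset_Ioo le_rfl hr.2.le))
        (fun x hx => hbd x ⟨hx.1, hx.2.trans hr.2⟩)
    have h2 : IntervalIntegrable f volume r b :=
      intervalIntegrable_of_bdd_contOn hr.2.le (hc.mono (Ioo_subset_Ioo hr.1.le le_rfl))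
        (fun x hx => hbd x ⟨hr.1.trans hx.1, hx.2⟩)
    have hsplit : (∫ x in a..r, f x) + ∫ x in r..b, f x = ∫ x in a..b, f x :=
      integral_add_adjacent_intervals h1 h2
    have heq : (∫ x in a..r, f x) - ∫ x in a..b, f x = -(∫ x in r..b, f x) := by linarith
    rw [heq, norm_neg]
    have hne : ∀ᵐ x : ℝ, x ≠ b := by
      rw [MeasureTheory.ae_iff]
      simpa using measure_singleton b
    have hb2 : ‖∫ x in r..b, f x‖ ≤ C * |b - r| := by
      apply intervalIntegral.norm_integral_le_of_norm_le_const_ae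
      filter_upwards [hne] with x hx hx2
      rw [uIoc_of_le hr.2.le] at hx2
      exact hbd x ⟨hr.1.trans hx2.1, lt_of_le_of_ne hx2.2 hx⟩
    calc ‖∫ x in r..b, f x‖ ≤ C * |b - r| := hb2
      _ = C * (b - r) := by rw [abs_of_nonneg (by linarith [hr.2])]
  · have h3 : Tendsto (fun r : ℝ => C * (b - r)) (𝓝 b) (𝓝 (C * (b - b))) :=
      tendsto_const_nhds.mul (tendsto_const_nhds.sub tendsto_id)
    simp only [sub_self, mul_zero] at h3
    exact h3.mono_left nhdsWithin_le_nhds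

lemma no_oscillation {δ : ℝ → ℝ} {R a b C : ℝ} (hR : 0 < R) (hab : a < b)
    (hc : ContinuousOn δ (Ico 0 R))
    (hd : ∀ r ∈ Ioo 0 R, DifferentiableAt ℝ δ r)
    (hC : ∀ r ∈ Ico (R/2) R, a ≤ δ r → δ r ≤ b → |deriv δ r| ≤ C)
    (hfa : ∃ᶠ r in 𝓝[<] R, δ r < a) (hfb : ∃ᶠ r in 𝓝[<] R, b < δ r) : False := by
  set C1 := max C 1 with hC1
  have hC1pos : 0 < C1 := lt_of_lt_of_le one_pos (le_max_right _ _)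
  set ε := min (R/2) ((b - a)/(2*C1)) with hε
  have hεpos : 0 < ε := lt_min (by linarith) (div_pos (by linarith) (by positivity))
  have hIoo : Ioo (R - ε) R ∈ 𝓝[<] R :=
    Ioo_mem_nhdsLT_of_mem ⟨by linarith, le_refl R⟩
  obtain ⟨r1, hr1b, hr1m⟩ := ((hfb.and_eventually hIoo)).exists
  have hIoo2 : Ioo r1 R ∈ 𝓝[<] R := Ioo_mem_nhdsLT_of_mem ⟨hr1m.2, le_refl R⟩
  obtain ⟨r2, hr2a, hr2m⟩ := ((hfa.and_eventually hIoo2)).exists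
  have hr12 : r1 < r2 := hr2m.1
  have hr1pos : 0 < r1 :=
    lt_of_le_of_lt (by linarith [min_le_left (R/2) ((b-a)/(2*C1))] : (0:ℝ) ≤ R - ε) hr1m.1
  have hsub : Icc r1 r2 ⊆ Ico 0 R := fun t ht =>
    ⟨le_trans hr1pos.le ht.1, lt_of_le_of_lt ht.2 hr2m.2⟩
  have hcont : ContinuousOn δ (Icc r1 r2) := hc.mono hsub
  set T := {t : ℝ | t ∈ Icc r1 r2 ∧ δ t ≤ a} with hT
  have hTclosed : IsClosed T := by
    have := hcont.preimage_isClosed_of_isClosed isClosed_Icc (isClosed_Iic (a := a))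
    simpa [hT, Set.inter_def, Set.preimage] using this
  have hTne : T.Nonempty := ⟨r2, ⟨⟨hr12.le, le_refl r2⟩, hr2a.le⟩⟩
  have hTbdd : BddBelow T := ⟨r1, fun t ht => ht.1.1⟩
  set s2 := sInf T with hs2
  have hs2T : s2 ∈ T := hTclosed.csInf_mem hTne hTbdd
  have hs2mem : s2 ∈ Icc r1 r2 := hs2T.1
  have hr1s2 : r1 < s2 := by
    rcases eq_or_lt_of_le hs2mem.1 with h | h
    · exfalso; rw [← h] at hs2T; linarith [hs2T.2, hr1b]
    · exact h
  have hgt : ∀ t ∈ Ico r1 s2, a < δ t := by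
    intro t ht
    by_contra h
    push_neg at h
    have : t ∈ T := ⟨⟨ht.1, le_trans ht.2.le hs2mem.2⟩, h⟩
    exact absurd (csInf_le hTbdd this) (not_le.2 ht.2)
  set S := {t : ℝ | t ∈ Icc r1 s2 ∧ b ≤ δ t} with hS
  have hSclosed : IsClosed S := by
    have := (hcont.mono (Icc_subset_Icc le_rfl hs2mem.2)).preimage_isClosed_of_isClosed
      isClosed_Icc (isClosed_Ici (a := b))
    simpa [hS, Set.inter_def, Set.preimage] using this
  have hSne : S.Nonempty := ⟨r1, ⟨⟨le_refl r1, hr1s2.le⟩, hr1b.le⟩⟩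
  have hSbdd : BddAbove S := ⟨s2, fun t ht => ht.1.2⟩
  set s1 := sSup S with hs1
  have hs1S : s1 ∈ S := hSclosed.csSup_mem hSne hSbdd
  have hs1mem : s1 ∈ Icc r1 s2 := hs1S.1
  have hs1s2 : s1 < s2 := by
    rcases eq_or_lt_of_le hs1mem.2 with h | h
    · exfalso; rw [h] at hs1S; linarith [hs1S.2, hs2T.2]
    · exact h
  have hltb : ∀ t, s1 < t → t ≤ s2 → δ t < b := by
    intro t ht1 ht2
    by_contra h
    push_neg at h
    have : t ∈ S := ⟨⟨le_trans hs1mem.1 ht1.le, ht2⟩, h⟩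
    exact absurd (le_csSup hSbdd this) (not_le.2 ht1)
  have hband : ∀ t ∈ Ioo s1 s2, a ≤ δ t ∧ δ t ≤ b := by
    intro t ht
    exact ⟨(hgt t ⟨le_trans hs1mem.1 ht.1.le, ht.2⟩).le, (hltb t ht.1 ht.2.le).le⟩
  have hIccsub : Icc s1 s2 ⊆ Icc r1 r2 := Icc_subset_Icc hs1mem.1 hs2mem.2
  obtain ⟨ξ, hξ, hslope⟩ := exists_hasDerivAt_eq_slope δ (deriv δ) hs1s2
    (hcont.mono hIccsub)
    (fun x hx => (hd x ⟨hr1pos.trans_le (hs1mem.1.trans hx.1.le),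
      (hsub (hIccsub (Ioo_subset_Icc_self hx))).2⟩).hasDerivAt)
  have hξmem : ξ ∈ Ico (R/2) R := by
    have h1 : R - ε ≤ ξ := by
      have h2 := hr1m.1
      have h3 := hs1mem.1
      have h4 := hξ.1
      linarith
    constructor
    · have : ε ≤ R/2 := min_le_left _ _
      linarith
    · exact (hsub (hIccsub (Ioo_subset_Icc_self hξ))).2
  have hCξ : |deriv δ ξ| ≤ C := hC ξ hξmem (hband ξ hξ).1 (hband ξ hξ).2
  have hδs1 : b ≤ δ s1 := hs1S.2
  have hδs2 : δ s2 ≤ a := hs2T.2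
  have hlen : s2 - s1 ≤ ε := by
    have h1 : r1 ≤ s1 := hs1mem.1
    have h2 : s2 ≤ r2 := hs2mem.2
    have h3 : r2 - r1 ≤ ε := by
      have := hr1m.1; have := hr2m.2; linarith
    linarith
  have hpos : (0:ℝ) < s2 - s1 := by linarith
  have hslope_abs : (b - a) / (s2 - s1) ≤ |deriv δ ξ| := by
    have h1 : (b - a) / (s2 - s1) ≤ (δ s1 - δ s2) / (s2 - s1) :=
      (div_le_div_iff_of_pos_right hpos).2 (by linarith)
    have h2 : (δ s1 - δ s2) / (s2 - s1) = -(deriv δ ξ) := by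
      rw [hslope]; ring
    rw [h2] at h1
    exact h1.trans (neg_le_abs _)
  have hfinal : b - a ≤ C * (s2 - s1) := by
    rw [div_le_iff₀ hpos] at hslope_abs
    calc b - a ≤ |deriv δ ξ| * (s2 - s1) := hslope_abs
      _ ≤ C * (s2 - s1) := mul_le_mul_of_nonneg_right hCξ hpos.le
  have hεle : ε ≤ (b - a)/(2*C1) := min_le_right _ _
  have hCC1 : C ≤ C1 := le_max_left _ _
  have h3 : C * (s2 - s1) ≤ C1 * (s2 - s1) := mul_le_mul_of_nonneg_right hCC1 hpos.le
  have h4 : C1 * (s2 - s1) ≤ C1 * ((b - a)/(2*C1)) :=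
    mul_le_mul_of_nonneg_left (hlen.trans hεle) hC1pos.le
  have h5 : C1 * ((b - a)/(2*C1)) = (b - a)/2 := by
    field_simp
  linarith
/-- At a finite maximal radius `R` of a regular solution of the polytropic static
system (with `0 < δ < η ≤ δ_c` and `η' < 0` on `(0,R)`), one has `δ(r) → 0` and
`η(r) → (3/R³)∫₀ᴿ δ(s)s² ds > 0` as `r → R⁻`. -/
theorem regularPoly_limits_at_finite_Rmax (γ β θ δc R : ℝ) (hβ0 : β ≠ 0)
    (hθ : 0 < θ) (hδc : 0 < δc) (hR : 0 < R)
    (δ η : ℝ → ℝ) (hreg : IsRegularPoly γ β θ R δ η)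
    (h0 : δ 0 = δc) (h0' : η 0 = δc)
    (hbound : ∀ r ∈ Ioo 0 R, 0 < δ r ∧ δ r < η r ∧ η r ≤ δc ∧ deriv η r < 0)
    (hmax : ¬ ∃ R' > R, ∃ δ' η' : ℝ → ℝ, IsRegularPoly γ β θ R' δ' η' ∧
      ∀ r ∈ Ico 0 R, δ' r = δ r) :
    Tendsto δ (𝓝[<] R) (𝓝 0) ∧
    0 < polyEta δ R ∧
    Tendsto η (𝓝[<] R) (𝓝 (polyEta δ R)) := by
  obtain ⟨hcδ, hdδ, hcδ', hposδ, hη0, hηeq, hode⟩ := hreg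
  -- basic bounds
  have hδle : ∀ r ∈ Ico 0 R, δ r ≤ δc := by
    intro r hr
    rcases eq_or_lt_of_le hr.1 with h | h
    · rw [← h, h0]
    · exact ((hbound r ⟨h, hr.2⟩).2.1.le.trans (hbound r ⟨h, hr.2⟩).2.2.1)
  -- the mass integrand
  set g : ℝ → ℝ := fun s => δ s * s ^ 2 with hg
  have hgcont : ContinuousOn g (Ioo 0 R) :=
    (hcδ.mono Ioo_subset_Ico_self).mul ((continuous_pow 2).continuousOn)
  have hgbd : ∀ s ∈ Ioo 0 R, |g s| ≤ δc * R ^ 2 := by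
    intro s hs
    have h1 : 0 < δ s := hposδ s ⟨hs.1.le, hs.2⟩
    have h2 : δ s ≤ δc := hδle s ⟨hs.1.le, hs.2⟩
    have h3 : s ^ 2 ≤ R ^ 2 := by nlinarith [hs.1.le, hs.2.le]
    have h4 : |g s| = δ s * s ^ 2 := by
      rw [hg]; exact abs_of_nonneg (by positivity)
    rw [h4]
    exact mul_le_mul h2 h3 (sq_nonneg s) hδc.le
  have hJint : IntervalIntegrable g volume 0 R :=
    intervalIntegrable_of_bdd_contOn hR.le hgcont hgbd
  have hJtend : Tendsto (fun r => ∫ s in (0:ℝ)..r, g s) (𝓝[<] R) (𝓝 (∫ s in (0:ℝ)..R, g s)) :=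
    tendsto_intervalIntegral_left_of_bdd hR hgcont hgbd
  have hJpos : 0 < ∫ s in (0:ℝ)..R, g s :=
    intervalIntegral_pos_of_pos_on hJint
      (fun x hx => mul_pos (hposδ x ⟨hx.1.le, hx.2⟩) (pow_pos hx.1 2)) hR
  have hEpos : 0 < polyEta δ R := by
    rw [polyEta]
    exact mul_pos (by positivity) hJpos
  have hηtend : Tendsto η (𝓝[<] R) (𝓝 (polyEta δ R)) := by
    have hc3 : ContinuousAt (fun r : ℝ => 3 / r ^ 3) R :=
      ContinuousAt.div continuousAt_const (continuousAt_pow _ _) (by positivity)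
    have h1 : Tendsto (fun r => 3 / r ^ 3 * ∫ s in (0:ℝ)..r, g s) (𝓝[<] R)
        (𝓝 (3 / R ^ 3 * ∫ s in (0:ℝ)..R, g s)) :=
      ((hc3.continuousWithinAt (s := Iio R))).mul hJtend
    refine h1.congr' ?_
    filter_upwards [Ioo_mem_nhdsLT_of_mem (⟨hR, le_refl R⟩ : R ∈ Ioc 0 R)] with r hr
    rw [hηeq r hr, polyEta]
  refine ⟨?_, hEpos, hηtend⟩
  by_cases hsmall : ∀ a, 0 < a → ∀ᶠ r in 𝓝[<] R, δ r < a
  · rw [Metric.tendsto_nhds]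
    intro ε hε
    filter_upwards [hsmall ε hε, Ioo_mem_nhdsLT_of_mem (⟨hR, le_refl R⟩ : R ∈ Ioc 0 R)]
      with r h1 h2
    rw [Real.dist_eq, sub_zero, abs_of_pos (hposδ r ⟨h2.1.le, h2.2⟩)]
    exact h1
  exfalso
  push_neg at hsmall
  obtain ⟨a, ha, hfreq⟩ := hsmall
  have hfreq' : ∃ᶠ r in 𝓝[<] R, a ≤ δ r := hfreq
  -- bound on the derivative wherever δ ≥ m
  have hCband : ∀ m, 0 < m → ∃ C, ∀ r ∈ Ico (R/2) R, m ≤ δ r → |deriv δ r| ≤ C := by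
    intro m hm
    set K : Set (ℝ × ℝ × ℝ) := Icc m δc ×ˢ Icc m δc ×ˢ Icc (R/2) R with hK
    have hKc : IsCompact K := (isCompact_Icc.prod (isCompact_Icc.prod isCompact_Icc))
    have hGc : ContinuousOn (fun x : ℝ × ℝ × ℝ => polyRHS γ β θ x.1 x.2.1 x.2.2) K := by
      intro x hx
      exact (contDiffAt_polyRHS γ β θ (lt_of_lt_of_le hm hx.1.1)
        (lt_of_lt_of_le hm hx.2.1.1)
        (ne_of_gt (lt_of_lt_of_le (by linarith) hx.2.2.1))).continuousAt.continuousWithinAt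
    obtain ⟨C, hC⟩ := hKc.exists_bound_of_continuousOn hGc
    refine ⟨C, fun r hr hm' => ?_⟩
    have hrI : r ∈ Ioo 0 R := ⟨by linarith [hr.1], hr.2⟩
    have hb := hbound r hrI
    rw [hode r hrI]
    have hmem : ((δ r, η r, r) : ℝ × ℝ × ℝ) ∈ K :=
      ⟨⟨hm', hδle r ⟨hrI.1.le, hrI.2⟩⟩, ⟨⟨le_trans hm' hb.2.1.le, hb.2.2.1⟩, ⟨hr.1, hr.2.le⟩⟩⟩
    have := hC _ hmem
    rwa [Real.norm_eq_abs] at this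
  -- eventually δ ≥ a/2
  have heva : ∀ᶠ r in 𝓝[<] R, a/2 ≤ δ r := by
    by_contra h
    rw [Filter.not_eventually] at h
    obtain ⟨C, hC⟩ := hCband (a/2) (by linarith)
    exact no_oscillation hR (show a/2 < 3*a/4 by linarith) hcδ hdδ
      (fun r hr h1 _ => hC r hr h1)
      (h.mono fun r hr => not_le.1 hr)
      (hfreq'.mono fun r hr => by linarith)
  obtain ⟨l, hlR, hl⟩ := mem_nhdsLT_iff_exists_Ioo_subset.1 heva
  set r₀ : ℝ := max ((l + R)/2) (3*R/4) with hr₀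
  have hlr₀ : l < r₀ := lt_of_lt_of_le (by simp only [mem_Iio] at hlR; linarith)
    (le_max_left _ _)
  have hr₀R : r₀ < R := by
    apply max_lt
    · simp only [mem_Iio] at hlR; linarith
    · linarith
  have hr₀half : R/2 ≤ r₀ := le_trans (by linarith) (le_max_right _ _)
  have hr₀pos : 0 < r₀ := by linarith
  have hr₀mem : r₀ ∈ Ioo 0 R := ⟨hr₀pos, hr₀R⟩
  have hge : ∀ r, r₀ ≤ r → r < R → a/2 ≤ δ r := fun r h1 h2 => hl ⟨lt_of_lt_of_le hlr₀ h1, h2⟩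
  obtain ⟨C, hC⟩ := hCband (a/2) (by linarith)
  have hdbd : ∀ x ∈ Ioo r₀ R, |deriv δ x| ≤ C := fun x hx =>
    hC x ⟨by linarith [hx.1], hx.2⟩ (hge x hx.1.le hx.2)
  have hdcont : ContinuousOn (deriv δ) (Ioo r₀ R) :=
    hcδ'.mono (Ioo_subset_Ioo hr₀pos.le le_rfl)
  have hAtend : Tendsto (fun r => ∫ x in r₀..r, deriv δ x) (𝓝[<] R)
      (𝓝 (∫ x in r₀..R, deriv δ x)) :=
    tendsto_intervalIntegral_left_of_bdd hr₀R hdcont hdbd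
  have hδeq : ∀ r ∈ Ioo r₀ R, δ r = δ r₀ + ∫ x in r₀..r, deriv δ x := by
    intro r hr
    have h1 : ∫ x in r₀..r, deriv δ x = δ r - δ r₀ := by
      apply integral_eq_sub_of_hasDerivAt
      · intro x hx
        rw [uIcc_of_le hr.1.le] at hx
        exact (hdδ x ⟨lt_of_lt_of_le hr₀pos hx.1, lt_of_le_of_lt hx.2 hr.2⟩).hasDerivAt
      · apply ContinuousOn.intervalIntegrable
        rw [uIcc_of_le hr.1.le]
        exact hcδ'.mono (fun x hx => ⟨lt_of_lt_of_le hr₀pos hx.1, lt_of_le_of_lt hx.2 hr.2⟩)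
    rw [h1]; ring
  set L : ℝ := δ r₀ + ∫ x in r₀..R, deriv δ x with hLdef
  have hδtend : Tendsto δ (𝓝[<] R) (𝓝 L) := by
    refine (tendsto_const_nhds.add hAtend).congr' ?_
    filter_upwards [Ioo_mem_nhdsLT_of_mem (⟨hr₀R, le_refl R⟩ : R ∈ Ioc r₀ R)] with r hr
    exact (hδeq r hr).symm
  have hLa : a/2 ≤ L := ge_of_tendsto hδtend heva
  have hLpos : 0 < L := by linarith
  -- local solution at R
  obtain ⟨p, q, ε, hε, hpR, hqR, hpq⟩ :=
    exists_local_sol γ β θ R L (∫ s in (0:ℝ)..R, g s) hR hLpos hJpos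
  have hRmemI : R ∈ Ioo (R - ε) (R + ε) := ⟨by linarith, by linarith⟩
  have hpc : ContinuousAt p R := (hpq R hRmemI).1.differentiableAt.continuousAt
  have hqc : ContinuousAt q R := (hpq R hRmemI).2.differentiableAt.continuousAt
  have hev : ∀ᶠ t in 𝓝 R, L/2 < p t ∧ (∫ s in (0:ℝ)..R, g s)/2 < q t := by
    have e1 : ∀ᶠ t in 𝓝 R, L/2 < p t := by
      refine hpc.eventually ?_
      rw [hpR]
      exact eventually_gt_nhds (by linarith)
    have e2 : ∀ᶠ t in 𝓝 R, (∫ s in (0:ℝ)..R, g s)/2 < q t := by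
      refine hqc.eventually ?_
      rw [hqR]
      exact eventually_gt_nhds (by linarith)
    exact e1.and e2
  rw [Metric.eventually_nhds_iff] at hev
  obtain ⟨d0, hd0, hd⟩ := hev
  set d1 : ℝ := min (d0/2) (ε/2) with hd1def
  have hd1pos : 0 < d1 := lt_min (by linarith) (by linarith)
  have hd1d0 : d1 < d0 := lt_of_le_of_lt (min_le_left _ _) (by linarith)
  have hd1ε : d1 ≤ ε/2 := min_le_right _ _
  set R'' : ℝ := R + d1 with hR''def
  set R' : ℝ := R + d1/2 with hR'def
  have hRR' : R < R' := by rw [hR'def]; linarith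
  have hR'R'' : R' < R'' := by rw [hR'def, hR''def]; linarith
  have hR''R : R < R'' := by rw [hR''def]; linarith
  have hIccsub : ∀ t, R ≤ t → t ≤ R'' → t ∈ Ioo (R - ε) (R + ε) := by
    intro t h1 h2
    rw [hR''def] at h2
    constructor <;> [linarith; linarith]
  have hpqIcc : ∀ t, R ≤ t → t ≤ R'' → L/2 < p t ∧ (∫ s in (0:ℝ)..R, g s)/2 < q t := by
    intro t h1 h2
    apply hd
    rw [Real.dist_eq, abs_of_nonneg (by linarith)]
    rw [hR''def] at h2
    linarith
  -- the spliced solution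
  set δ2 : ℝ → ℝ := fun r => if r < R then δ r else p r with hδ2def
  set η2 : ℝ → ℝ := fun r => if r = 0 then δ2 0 else polyEta δ2 r with hη2def
  have hδ2lt : ∀ r, r < R → δ2 r = δ r := fun r hr => if_pos hr
  have hδ2ge : ∀ r, R ≤ r → δ2 r = p r := fun r hr => if_neg (not_lt.2 hr)
  have hδ2R : δ2 R = L := by rw [hδ2ge R le_rfl, hpR]
  have hδ2evlt : ∀ r, r < R → δ2 =ᶠ[𝓝 r] δ := by
    intro r hr
    filter_upwards [Iio_mem_nhds hr] with x hx
    exact hδ2lt x hx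
  have hδ2evgt : ∀ r, R < r → δ2 =ᶠ[𝓝 r] p := by
    intro r hr
    filter_upwards [Ioi_mem_nhds hr] with x hx
    exact hδ2ge x (le_of_lt hx)
  have hδ2pos : ∀ r ∈ Ico 0 R'', 0 < δ2 r := by
    intro r hr
    rcases lt_or_ge r R with h | h
    · rw [hδ2lt r h]; exact hposδ r ⟨hr.1, h⟩
    · rw [hδ2ge r h]
      have := (hpqIcc r h hr.2.le).1
      linarith
  -- continuity of the splice
  have hδ2contR : ContinuousAt δ2 R := by
    have hsup : 𝓝[<] R ⊔ 𝓝[≥] R = 𝓝 R := nhdsLT_sup_nhdsGE R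
    rw [ContinuousAt, hδ2R, ← hsup, tendsto_sup]
    constructor
    · refine hδtend.congr' ?_
      filter_upwards [eventually_mem_nhdsWithin] with x hx
      exact (hδ2lt x hx).symm
    · have h1 : Tendsto p (𝓝[≥] R) (𝓝 L) := by
        rw [← hpR]
        exact hpc.continuousWithinAt
      refine h1.congr' ?_
      filter_upwards [eventually_mem_nhdsWithin] with x hx
      exact (hδ2ge x hx).symm
  have hδ2cont : ContinuousOn δ2 (Ico 0 R'') := by
    intro x hx
    rcases lt_trichotomy x R with h | h | h
    · have hc1 : ContinuousWithinAt δ (Ico 0 R'') x :=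
        (hcδ x ⟨hx.1, h⟩).mono_of_mem_nhdsWithin
          (mem_nhdsWithin.2 ⟨Iio R, isOpen_Iio, h, fun y hy => ⟨hy.2.1, hy.1⟩⟩)
      refine hc1.congr_of_eventuallyEq ?_ (hδ2lt x h)
      exact ((hδ2evlt x h).filter_mono nhdsWithin_le_nhds)
    · rw [h]; exact hδ2contR.continuousWithinAt
    · have hc1 : ContinuousAt p x :=
        (hpq x (hIccsub x (by linarith) (by linarith [hx.2]))).1.differentiableAt.continuousAt
      have : ContinuousAt δ2 x := hc1.congr (hδ2evgt x h).symm
      exact this.continuousWithinAt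
  -- the primitive of the spliced density
  set Φ : ℝ → ℝ := fun r => ∫ s in (0:ℝ)..r, δ2 s * s ^ 2 with hΦdef
  have hg2cont : ContinuousOn (fun s => δ2 s * s ^ 2) (Ico 0 R'') :=
    hδ2cont.mul (continuous_pow 2).continuousOn
  have hint2 : ∀ x, 0 ≤ x → x < R'' → IntervalIntegrable (fun s => δ2 s * s ^ 2) volume 0 x := by
    intro x h1 h2
    apply ContinuousOn.intervalIntegrable
    rw [uIcc_of_le h1]
    exact hg2cont.mono (fun y hy => ⟨hy.1, lt_of_le_of_lt hy.2 h2⟩)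
  have hΦcont : ContinuousOn Φ (Icc 0 R') := by
    have h1 : IntegrableOn (fun s => δ2 s * s ^ 2) (uIcc 0 R') volume := by
      rw [uIcc_of_le (by linarith)]
      exact (hg2cont.mono (fun y hy => ⟨hy.1, lt_of_le_of_lt hy.2 hR'R''⟩)).integrableOn_Icc
    have := intervalIntegral.continuousOn_primitive_interval h1
    rwa [uIcc_of_le (by linarith)] at this
  have hne : ∀ᵐ x : ℝ, x ≠ R := by
    rw [MeasureTheory.ae_iff]
    simpa using measure_singleton R
  have hΦeq : ∀ r, 0 ≤ r → r ≤ R → Φ r = ∫ s in (0:ℝ)..r, δ s * s ^ 2 := by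
    intro r h1 h2
    apply intervalIntegral.integral_congr_ae
    rw [uIoc_of_le h1]
    filter_upwards [hne] with x hx hx2
    have : x < R := lt_of_le_of_ne (le_trans hx2.2 h2) hx
    rw [hδ2lt x this]
  have hq0 : q R = Φ R := by
    rw [hqR, hΦeq R hR.le le_rfl]
  have hqΦ : ∀ x, R ≤ x → x ≤ R' → q x = Φ x := by
    intro x hx1 hx2
    rcases eq_or_lt_of_le hx1 with h | h
    · rw [← h]; exact hq0
    · have key := eq_of_has_deriv_right_eq (a := R) (b := x)
        (f := q) (g := Φ) (f' := fun t => p t * t ^ 2)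
        ?_ ?_ ?_ ?_ hq0
      · exact key x ⟨hx1, le_rfl⟩
      · intro y hy
        exact ((hpq y (hIccsub y hy.1 (by linarith [hy.2]))).2).hasDerivWithinAt
      · intro y hy
        have hy'' : y < R'' := by have := hy.2; linarith
        have h1 : HasDerivWithinAt Φ (δ2 y * y ^ 2) (Ici y) y := by
          apply intervalIntegral.integral_hasDerivWithinAt_right
            (hint2 y (by linarith [hy.1]) hy'')
          · have hy0 : (0:ℝ) ≤ y := by linarith [hy.1]
            exact ⟨Ico 0 R'', mem_nhdsWithin.2 ⟨Iio R'', isOpen_Iio, hy'',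
              fun z hz => ⟨le_trans hy0 (le_of_lt hz.2), hz.1⟩⟩,
              (hg2cont.aemeasurable measurableSet_Ico).aestronglyMeasurable⟩
          · have hy0 : (0:ℝ) ≤ y := by linarith [hy.1]
            exact (hg2cont y ⟨hy0, hy''⟩).mono_of_mem_nhdsWithin
              (mem_nhdsWithin.2 ⟨Iio R'', isOpen_Iio, hy'',
                fun z hz => ⟨le_trans hy0 (le_of_lt hz.2), hz.1⟩⟩)
        have h2 : δ2 y * y ^ 2 = p y * y ^ 2 := by rw [hδ2ge y hy.1]
        rwa [h2] at h1
      · intro y hy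
        exact ((hpq y (hIccsub y hy.1 (by linarith [hy.2]))).2).differentiableAt.continuousAt.continuousWithinAt
      · exact hΦcont.mono (fun y hy => ⟨le_trans hR.le hy.1, le_trans hy.2 hx2⟩)
  -- derivative facts for the splice
  have hd2a : ∀ r ∈ Ioo 0 R, HasDerivAt δ2 (deriv δ r) r := by
    intro r hr
    exact ((hdδ r hr).hasDerivAt).congr_of_eventuallyEq (hδ2evlt r hr.2)
  have hd2b : ∀ r, R < r → r < R'' → HasDerivAt δ2 (polyRHS γ β θ (p r) (3 * q r / r ^ 3) r) r := by
    intro r h1 h2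
    exact ((hpq r (hIccsub r h1.le h2.le)).1).congr_of_eventuallyEq (hδ2evgt r h1)
  have hη2val : ∀ r, r ≠ 0 → η2 r = 3 / r ^ 3 * Φ r := by
    intro r hr
    rw [hη2def]
    simp only [if_neg hr]
    rw [polyEta]
  have hη2eq : ∀ r ∈ Ioo 0 R, η2 r = η r := by
    intro r hr
    rw [hη2val r hr.1.ne', hΦeq r hr.1.le hr.2.le, hηeq r hr, polyEta]
  have hΦpos : ∀ r ∈ Ioo 0 R'', 0 < Φ r := by
    intro r hr
    exact intervalIntegral_pos_of_pos_on (hint2 r hr.1.le hr.2)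
      (fun x hx => mul_pos (hδ2pos x ⟨hx.1.le, lt_trans hx.2 hr.2⟩) (pow_pos hx.1 2)) hr.1
  have hη2pos : ∀ r ∈ Ioo 0 R'', 0 < η2 r := by
    intro r hr
    rw [hη2val r hr.1.ne']
    have := hΦpos r hr
    have hr0 : (0:ℝ) < r := hr.1
    have h3 : (0:ℝ) < 3 / r ^ 3 := by positivity
    exact mul_pos h3 this
  -- the limit derivative value at R
  set c₀ : ℝ := polyRHS γ β θ L (polyEta δ R) R with hc₀def
  have hGcont : ContinuousAt (fun x : ℝ × ℝ × ℝ => polyRHS γ β θ x.1 x.2.1 x.2.2)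
      ((L, polyEta δ R, R) : ℝ × ℝ × ℝ) :=
    (contDiffAt_polyRHS γ β θ (by simpa using hLpos) (by simpa using hEpos)
      (by simpa using hR.ne')).continuousAt
  have hdlt : Tendsto (deriv δ) (𝓝[<] R) (𝓝 c₀) := by
    have h1 : Tendsto (fun r => ((δ r, η r, r) : ℝ × ℝ × ℝ)) (𝓝[<] R)
        (𝓝 ((L, polyEta δ R, R) : ℝ × ℝ × ℝ)) :=
      hδtend.prodMk_nhds (hηtend.prodMk_nhds (tendsto_id.mono_right nhdsWithin_le_nhds))
    have h2 := hGcont.tendsto.comp h1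
    refine h2.congr' ?_
    filter_upwards [Ioo_mem_nhdsLT_of_mem (⟨hR, le_refl R⟩ : R ∈ Ioc 0 R)] with r hr
    exact (hode r hr).symm
  have hdrt : Tendsto (deriv δ2) (𝓝[>] R) (𝓝 c₀) := by
    have hpt : Tendsto p (𝓝[>] R) (𝓝 L) := by
      rw [← hpR]; exact hpc.continuousWithinAt
    have hqt : Tendsto (fun r => 3 * q r / r ^ 3) (𝓝[>] R) (𝓝 (polyEta δ R)) := by
      have h1 : ContinuousAt (fun r => 3 * q r / r ^ 3) R :=
        (continuousAt_const.mul hqc).div (continuousAt_pow _ _) (by positivity)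
      have h2 : 3 * q R / R ^ 3 = polyEta δ R := by
        rw [hqR, polyEta, ← hg]; ring
      rw [← h2]
      exact h1.continuousWithinAt
    have h1 : Tendsto (fun r => ((p r, 3 * q r / r ^ 3, r) : ℝ × ℝ × ℝ)) (𝓝[>] R)
        (𝓝 ((L, polyEta δ R, R) : ℝ × ℝ × ℝ)) :=
      hpt.prodMk_nhds (hqt.prodMk_nhds (tendsto_id.mono_right nhdsWithin_le_nhds))
    have h2 := hGcont.tendsto.comp h1
    refine h2.congr' ?_
    filter_upwards [Ioo_mem_nhdsGT_of_mem (⟨le_refl R, hR''R⟩ : R ∈ Ico R R'')] with r hr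
    exact ((hd2b r hr.1 hr.2).deriv).symm
  have hδ2derivR : HasDerivAt δ2 c₀ R := by
    have hleft : HasDerivWithinAt δ2 c₀ (Iic R) R := by
      apply hasDerivWithinAt_Iic_of_tendsto_deriv (s := Ioo 0 R)
      · exact fun y hy => ((hd2a y hy).differentiableAt).differentiableWithinAt
      · exact (hδ2cont R ⟨hR.le, hR''R⟩).mono (fun y hy => ⟨hy.1.le, lt_trans hy.2 hR''R⟩)
      · exact Ioo_mem_nhdsLT_of_mem ⟨hR, le_refl R⟩
      · refine hdlt.congr' ?_
        filter_upwards [Ioo_mem_nhdsLT_of_mem (⟨hR, le_refl R⟩ : R ∈ Ioc 0 R)] with r hr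
        exact ((hd2a r hr).deriv).symm
    have hright : HasDerivWithinAt δ2 c₀ (Ici R) R := by
      apply hasDerivWithinAt_Ici_of_tendsto_deriv (s := Ioo R R'')
      · exact fun y hy => ((hd2b y hy.1 hy.2).differentiableAt).differentiableWithinAt
      · exact (hδ2cont R ⟨hR.le, hR''R⟩).mono (fun y hy => ⟨le_trans hR.le hy.1.le, hy.2⟩)
      · exact Ioo_mem_nhdsGT_of_mem ⟨le_refl R, hR''R⟩
      · exact hdrt
    have := hleft.union hright
    rwa [Iic_union_Ici, hasDerivWithinAt_univ] at this
  have hη2R : η2 R = polyEta δ R := by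
    rw [hη2val R hR.ne', hΦeq R hR.le le_rfl, polyEta]
  -- the ODE for the splice
  have hode2 : ∀ r ∈ Ioo 0 R', deriv δ2 r = polyRHS γ β θ (δ2 r) (η2 r) r := by
    intro r hr
    rcases lt_trichotomy r R with h | h | h
    · rw [(hd2a r ⟨hr.1, h⟩).deriv, hode r ⟨hr.1, h⟩, hδ2lt r h, hη2eq r ⟨hr.1, h⟩]
    · subst h
      rw [hδ2derivR.deriv, hc₀def, hδ2R, hη2R]
    · have hrR'' : r < R'' := lt_trans hr.2 hR'R''
      rw [(hd2b r h hrR'').deriv, hδ2ge r h.le]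
      have hqr : η2 r = 3 * q r / r ^ 3 := by
        have hr0 : (0:ℝ) < r := hr.1
        rw [hη2val r hr0.ne', ← hqΦ r h.le hr.2.le]
        ring
      rw [hqr]
  have hdiff2 : ∀ r ∈ Ioo 0 R', DifferentiableAt ℝ δ2 r := by
    intro r hr
    rcases lt_trichotomy r R with h | h | h
    · exact (hd2a r ⟨hr.1, h⟩).differentiableAt
    · subst h; exact hδ2derivR.differentiableAt
    · exact (hd2b r h (lt_trans hr.2 hR'R'')).differentiableAt
  have hcont2 : ContinuousOn (deriv δ2) (Ioo 0 R') := by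
    intro x hx
    have hx0 : (0:ℝ) < x := hx.1
    have hx'' : x ∈ Ioo 0 R'' := ⟨hx.1, lt_trans hx.2 hR'R''⟩
    have hδ2cx : ContinuousAt δ2 x := hδ2cont.continuousAt (Ico_mem_nhds hx0 hx''.2)
    have hΦcx : ContinuousAt Φ x := hΦcont.continuousAt (Icc_mem_nhds hx0 hx.2)
    have hη2cx : ContinuousAt η2 x := by
      have hev2 : η2 =ᶠ[𝓝 x] fun r => 3 / r ^ 3 * Φ r := by
        filter_upwards [Ioi_mem_nhds hx0] with y hy
        exact hη2val y (ne_of_gt hy)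
      rw [continuousAt_congr hev2]
      exact (continuousAt_const.div (continuousAt_pow _ _) (by positivity)).mul hΦcx
    have hcomp : ContinuousAt (fun r => polyRHS γ β θ (δ2 r) (η2 r) r) x := by
      have hG := (contDiffAt_polyRHS γ β θ (x := ((δ2 x, η2 x, x) : ℝ × ℝ × ℝ))
        (by simpa using hδ2pos x ⟨hx0.le, hx''.2⟩) (by simpa using hη2pos x hx'')
        (by simpa using hx0.ne')).continuousAt
      have := hG.comp (x := x) (hδ2cx.prodMk (hη2cx.prodMk continuousAt_id))
      exact this
    exact (hcomp.continuousWithinAt).congr (fun y hy => hode2 y hy) (hode2 x hx)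
  apply hmax
  refine ⟨R', hRR', δ2, η2, ⟨?_, ?_, ?_, ?_, ?_, ?_, ?_⟩, ?_⟩
  · exact hδ2cont.mono (fun y hy => ⟨hy.1, lt_trans hy.2 hR'R''⟩)
  · exact hdiff2
  · exact hcont2
  · exact fun r hr => hδ2pos r ⟨hr.1, lt_trans hr.2 hR'R''⟩
  · simp [hη2def]
  · intro r hr; simp [hη2def, hr.1.ne']
  · exact hode2
  · exact fun r hr => hδ2lt r hr.2
end
end

section
/- Let γ∈ℝ, β≠0, θ>0 and δ_c>0. Suppose (δ,η) is a regular solution of the polytropic static system on [0,∞) with δ(0)=η(0)=δ_c, satisfying 0<δ(r)<η(r) and η'(r)<0 for all r>0. Then lim_{r→∞}δ(r)=0 and lim_{r→∞}η(r)=0. -/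
open Real Set Filter Topology

noncomputable section

lemma rpow_min_le {L M a x : ℝ} (hL : 0 < L) (h1 : L ≤ x) (h2 : x ≤ M) :
    min (L ^ a) (M ^ a) ≤ x ^ a := by
  rcases le_or_gt 0 a with ha | ha
  · exact (min_le_left _ _).trans (Real.rpow_le_rpow hL.le h1 ha)
  · exact (min_le_right _ _).trans (Real.rpow_le_rpow_of_nonpos (hL.trans_le h1) h2 ha.le)

lemma rpow_continuousOn {a u₀ : ℝ} (h : 0 < u₀) :
    ContinuousOn (fun y : ℝ => y ^ a) (Icc u₀ 1) := fun x hx =>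
  (Real.continuousAt_rpow_const x a (Or.inl (h.trans_le hx.1).ne')).continuousWithinAt

lemma bfun_continuousOn {β u₀ : ℝ} (h : 0 < u₀) :
    ContinuousOn (fun y => Bfun β y) (Icc u₀ 1) := by
  unfold Bfun
  by_cases hβ : β = 1
  · simp only [hβ, if_pos rfl]
    exact (continuousOn_id.mul ((continuousOn_id.sub
      (Real.continuousOn_log.mono (fun x hx => (h.trans_le hx.1).ne'))).sub continuousOn_const))
  · simp only [if_neg hβ]
    exact ((continuousOn_id.add (continuousOn_const.mul (rpow_continuousOn h))).sub
      (continuousOn_const.mul (rpow_continuousOn h))).div_const _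


set_option maxHeartbeats 1000000 in
/-- A global regular solution of the polytropic static system (with `0 < δ < η` and
`η' < 0` on `(0,∞)`) satisfies `δ(r) → 0` and `η(r) → 0` as `r → ∞`. -/
theorem regularPoly_limits_at_infinity (γ β θ δc : ℝ) (hβ0 : β ≠ 0)
    (hθ : 0 < θ) (hδc : 0 < δc)
    (δ η : ℝ → ℝ) (hreg : IsRegularPolyGlobal γ β θ δ η)
    (h0 : δ 0 = δc) (h0' : η 0 = δc)
    (hbound : ∀ r ∈ Ioi (0:ℝ), 0 < δ r ∧ δ r < η r ∧ deriv η r < 0) :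
    Tendsto δ atTop (𝓝 0) ∧ Tendsto η atTop (𝓝 0) := by
  obtain ⟨hδcont, hδdiff, hδ'cont, hδpos, hη0, hηeq, hODE⟩ := hreg
  have hδposIoi : ∀ r : ℝ, 0 < r → 0 < δ r := fun r hr => hδpos r (le_of_lt hr)
  have hδlt : ∀ r : ℝ, 0 < r → δ r < η r := fun r hr => (hbound r hr).2.1
  have hηpos : ∀ r : ℝ, 0 < r → 0 < η r := fun r hr => (hδposIoi r hr).trans (hδlt r hr)
  have hδcontAt : ∀ r : ℝ, 0 < r → ContinuousAt δ r := fun r hr => (hδdiff r hr).continuousAt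
  -- derivative of η
  have hcont2 : ContinuousOn (fun s : ℝ => δ s * s ^ 2) (Ici 0) :=
    hδcont.mul (Continuous.continuousOn (by continuity))
  have hηderiv : ∀ r : ℝ, 0 < r → HasDerivAt η (3 * (δ r - η r) / r) r := by
    intro r hr
    set G : ℝ := ∫ s in (0:ℝ)..r, δ s * s ^ 2 with hGdef
    have hG : HasDerivAt (fun x => ∫ s in (0:ℝ)..x, δ s * s ^ 2) (δ r * r ^ 2) r := by
      refine intervalIntegral.integral_hasDerivAt_right
        ((hcont2.mono ?_).intervalIntegrable)
        (ContinuousOn.stronglyMeasurableAtFilter isOpen_Ioi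
          (hcont2.mono Ioi_subset_Ici_self) r hr)
        ((hδcontAt r hr).mul ((continuous_pow 2).continuousAt))
      rw [Set.uIcc_of_le hr.le]; exact Icc_subset_Ici_self
    have h3 : HasDerivAt (fun x : ℝ => 3 / x ^ 3) (-9 / r ^ 4) r := by
      have h := ((hasDerivAt_pow 3 r).inv (pow_ne_zero 3 hr.ne')).const_mul (3:ℝ)
      convert h using 1
      · rfl
      · rfl
      · rfl
      push_cast
      field_simp
      ring
    have hP : HasDerivAt (polyEta δ) (-9 / r ^ 4 * G + 3 / r ^ 3 * (δ r * r ^ 2)) r := h3.mul hG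
    have hEeq : η =ᶠ[𝓝 r] polyEta δ := by
      filter_upwards [IsOpen.mem_nhds isOpen_Ioi hr] with x hx using hηeq x hx
    have hval : η r = 3 / r ^ 3 * G := hηeq r hr
    have hfin := hP.congr_of_eventuallyEq hEeq
    convert hfin using 1
    · rfl
    · rfl
    rw [hval]
    field_simp
    ring
  have hηcontAt : ∀ r : ℝ, 0 < r → ContinuousAt η r := fun r hr => (hηderiv r hr).continuousAt
  -- η is antitone on (0, ∞)
  have hanti : AntitoneOn η (Ioi 0) := by
    refine (strictAntiOn_of_deriv_neg (convex_Ioi 0)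
      (fun r hr => (hηcontAt r hr).continuousWithinAt) ?_).antitoneOn
    intro r hr; rw [interior_Ioi] at hr; exact (hbound r hr).2.2
  set L := sInf (η '' Ioi 0) with hLdef
  have hbdd : BddBelow (η '' Ioi 0) := by
    refine ⟨0, ?_⟩; rintro x ⟨r, hr, rfl⟩; exact (hηpos r hr).le
  have hLle : ∀ r : ℝ, 0 < r → L ≤ η r := fun r hr => csInf_le hbdd ⟨r, hr, rfl⟩
  have hL0 : 0 ≤ L := by
    refine le_csInf ⟨η 1, ⟨1, Set.mem_Ioi.mpr one_pos, rfl⟩⟩ ?_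
    rintro x ⟨r, hr, rfl⟩; exact (hηpos r hr).le
  have hηtend : Tendsto η atTop (𝓝 L) := by
    rw [Metric.tendsto_atTop]
    intro ε hε
    have hne : (η '' Ioi 0).Nonempty := ⟨η 1, 1, Set.mem_Ioi.mpr one_pos, rfl⟩
    obtain ⟨x, ⟨r₀, hr₀, rfl⟩, hx⟩ := exists_lt_of_csInf_lt hne (lt_add_of_pos_right L hε)
    refine ⟨max r₀ 1, fun r hr => ?_⟩
    have hrpos : (0:ℝ) < r := lt_of_lt_of_le one_pos (le_trans (le_max_right _ _) hr)
    have h1 : η r ≤ η r₀ := hanti hr₀ hrpos (le_trans (le_max_left _ _) hr)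
    have h2 : L ≤ η r := hLle r hrpos
    rw [Real.dist_eq, abs_sub_lt_iff]
    constructor <;> linarith
  have hLzero : L = 0 := by
    by_contra hLne
    have hL : 0 < L := lt_of_le_of_ne hL0 (Ne.symm hLne)
    set M := η 1 with hMdef
    have hM : 0 < M := hηpos 1 one_pos
    have hLM : L ≤ M := hLle 1 one_pos
    have hηle : ∀ r : ℝ, 1 ≤ r → η r ≤ M :=
      fun r hr => hanti (mem_Ioi.mpr one_pos) (mem_Ioi.mpr (lt_of_lt_of_le one_pos hr)) hr
    -- frequently δ is close to L
    have hfreq : ∀ R : ℝ, 1 ≤ R → ∃ r, R ≤ r ∧ 7 * L / 8 < δ r := by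
      intro R hR
      by_contra hcon
      push_neg at hcon
      have hRpos : 0 < R := lt_of_lt_of_le zero_lt_one hR
      set E := 8 * (M - L) / (3 * L) + 1 with hEdef
      have hE : 0 < E := by
        have h1 : 0 ≤ M - L := by linarith
        positivity
      set R' := R * Real.exp E with hR'def
      have hRR' : R < R' := by
        have h1 : 1 < Real.exp E := Real.one_lt_exp_iff.mpr hE
        nlinarith
      have hsub : Icc R R' ⊆ Ioi 0 := fun x hx => lt_of_lt_of_le hRpos hx.1
      have hcontI : ContinuousOn (fun x => 3 * (δ x - η x) / x) (Icc R R') := by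
        intro x hx
        have hxpos : 0 < x := hsub hx
        exact (((continuousAt_const.mul ((hδcontAt x hxpos).sub (hηcontAt x hxpos))).div
          continuousAt_id hxpos.ne').continuousWithinAt)
      have hFTC : ∫ x in R..R', 3 * (δ x - η x) / x = η R' - η R := by
        refine intervalIntegral.integral_eq_sub_of_hasDerivAt ?_ ?_
        · intro x hx
          rw [Set.uIcc_of_le hRR'.le] at hx
          exact hηderiv x (hsub hx)
        · rw [intervalIntegrable_iff_integrableOn_Icc_of_le hRR'.le]
          exact (hcontI.integrableOn_compact isCompact_Icc)
      have hintleft : IntervalIntegrable (fun x => 3 * (δ x - η x) / x) MeasureTheory.volume R R' := by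
        rw [intervalIntegrable_iff_integrableOn_Icc_of_le hRR'.le]
        exact (hcontI.integrableOn_compact isCompact_Icc)
      have hintright : IntervalIntegrable (fun x : ℝ => -(3 * L / 8) * x⁻¹) MeasureTheory.volume R R' := by
        apply ContinuousOn.intervalIntegrable
        intro x hx
        rw [Set.uIcc_of_le hRR'.le] at hx
        exact (continuousAt_const.mul (continuousAt_inv₀ (hsub hx).ne')).continuousWithinAt
      have hmono2 : ∫ x in R..R', 3 * (δ x - η x) / x ≤ ∫ x in R..R', -(3 * L / 8) * x⁻¹ := by
        apply intervalIntegral.integral_mono_on hRR'.le hintleft hintright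
        intro x hx
        have hxpos : 0 < x := hsub hx
        have h1 : δ x ≤ 7 * L / 8 := hcon x hx.1
        have h2 : L ≤ η x := hLle x hxpos
        have h3 : δ x - η x ≤ -(L / 8) := by linarith
        calc 3 * (δ x - η x) / x = 3 * (δ x - η x) * x⁻¹ := by rw [div_eq_mul_inv]
          _ ≤ -(3 * L / 8) * x⁻¹ := by
              apply mul_le_mul_of_nonneg_right (by linarith) (inv_nonneg.mpr hxpos.le)
      have hval : ∫ x in R..R', -(3 * L / 8) * x⁻¹ = -(3 * L / 8) * E := by
        rw [intervalIntegral.integral_const_mul, integral_inv]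
        · have hq : R' / R = Real.exp E := by
            rw [hR'def]; field_simp
          rw [hq, Real.log_exp]
        · rw [Set.uIcc_of_le hRR'.le]
          exact fun h => lt_irrefl 0 (mem_Ioi.mp (hsub h))
      have hEval : -(3 * L / 8) * E = -(M - L) - 3 * L / 8 := by
        rw [hEdef]; field_simp; ring
      have h1 : L ≤ η R' := hLle R' (lt_trans hRpos hRR')
      have h2 : η R ≤ M := hηle R hR
      rw [hFTC, hval, hEval] at hmono2
      linarith
    -- the key derivative bound
    set u₀ := L / (2 * M) with hu₀def
    have hu₀ : 0 < u₀ := by positivity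
    have hu₀1 : u₀ ≤ 1 := by
      rw [hu₀def, div_le_one (by positivity)]; linarith
    obtain ⟨K₁, hK₁⟩ := (isCompact_Icc : IsCompact (Icc u₀ 1)).exists_bound_of_continuousOn
      ((rpow_continuousOn hu₀).mul (bfun_continuousOn hu₀))
    have hK₁0 : 0 ≤ K₁ := le_trans (norm_nonneg _) (hK₁ u₀ ⟨le_refl _, hu₀1⟩)
    set c₂ := min (L ^ (2 - γ)) (M ^ (2 - γ)) with hc₂def
    have hc₂ : 0 < c₂ := lt_min (Real.rpow_pos_of_pos hL _) (Real.rpow_pos_of_pos hM _)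
    set c₃ := min (u₀ ^ (1 - β)) 1 with hc₃def
    have hc₃ : 0 < c₃ := lt_min (Real.rpow_pos_of_pos hu₀ _) one_pos
    set c := θ * c₂ * (L / 2) * c₃ with hcdef
    have hc : 0 < c := by positivity
    set K := |3 * (β - γ)| * K₁ * M with hKdef
    have hK0 : 0 ≤ K := by positivity
    set R₁ := max 1 ((K + 1) / c) with hR₁def
    have hR₁1 : (1:ℝ) ≤ R₁ := le_max_left _ _
    have hkey : ∀ r : ℝ, R₁ ≤ r → L / 2 ≤ δ r → deriv δ r ≤ -1 := by
      intro r hrR hLd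
      have hr1 : (1:ℝ) ≤ r := hR₁1.trans hrR
      have hrpos : 0 < r := lt_of_lt_of_le zero_lt_one hr1
      have hepos : 0 < η r := hηpos r hrpos
      have heM : η r ≤ M := hηle r hr1
      have heL : L ≤ η r := hLle r hrpos
      have hd : 0 < δ r := hδposIoi r hrpos
      set u := δ r / η r with hudef
      have hu1 : u ≤ 1 := (div_le_one hepos).mpr (hδlt r hrpos).le
      have huu₀ : u₀ ≤ u := by
        rw [hu₀def, hudef]
        calc L / (2 * M) = (L / 2) / M := by ring
          _ ≤ (L / 2) / η r := div_le_div_of_nonneg_left (by linarith) hepos heM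
          _ ≤ δ r / η r := (div_le_div_iff_of_pos_right hepos).mpr hLd
      have hu0 : 0 < u := lt_of_lt_of_le hu₀ huu₀
      set p := u ^ (1 - β) with hpdef
      have hp : 0 < p := Real.rpow_pos_of_pos hu0 _
      have hABs : |p * Bfun β u| ≤ K₁ := by
        have h := hK₁ u ⟨huu₀, hu1⟩
        rwa [Real.norm_eq_abs] at h
      have hepow : 0 < η r ^ (2 - γ) := Real.rpow_pos_of_pos hepos _
      rw [hODE r (mem_Ioi.mpr hrpos)]
      have hsplit : polyRHS γ β θ (δ r) (η r) r =
          p * Bfun β u * (3 * (β - γ)) * η r / r - θ * r * (η r ^ (2 - γ) * (δ r * p)) := by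
        rw [polyRHS, ← hudef, ← hpdef]; ring
      rw [hsplit]
      have hA : p * Bfun β u * (3 * (β - γ)) * η r / r ≤ K / r := by
        apply (div_le_div_iff_of_pos_right hrpos).mpr
        have habs : |p * Bfun β u * (3 * (β - γ)) * η r|
            = |p * Bfun β u| * |3 * (β - γ)| * η r := by
          rw [abs_mul, abs_mul, abs_of_pos hepos]
        calc p * Bfun β u * (3 * (β - γ)) * η r
            ≤ |p * Bfun β u * (3 * (β - γ)) * η r| := le_abs_self _
          _ = |p * Bfun β u| * |3 * (β - γ)| * η r := habs
          _ ≤ K₁ * |3 * (β - γ)| * M := by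
              apply mul_le_mul (mul_le_mul_of_nonneg_right hABs (abs_nonneg _)) heM hepos.le
                (by positivity)
          _ = K := by rw [hKdef]; ring
      have hY : c * r ≤ θ * r * (η r ^ (2 - γ) * (δ r * p)) := by
        have h2 : c₂ ≤ η r ^ (2 - γ) := by
          rw [hc₂def]; exact rpow_min_le hL heL heM
        have h3 : c₃ ≤ p := by
          rw [hc₃def, hpdef]
          have h := rpow_min_le (a := 1 - β) hu₀ huu₀ hu1
          rwa [Real.one_rpow] at h
        calc c * r = θ * r * (c₂ * (L / 2 * c₃)) := by rw [hcdef]; ring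
          _ ≤ θ * r * (η r ^ (2 - γ) * (δ r * p)) := by
              apply mul_le_mul_of_nonneg_left _ (by positivity)
              exact mul_le_mul h2 (mul_le_mul hLd h3 hc₃.le hd.le) (by positivity) hepow.le
      have hKr : K / r ≤ K := div_le_self hK0 hr1
      have hcr : K + 1 ≤ c * r := by
        have h5 : (K + 1) / c ≤ r := le_trans (le_max_right _ _) hrR
        calc K + 1 = c * ((K + 1) / c) := by field_simp
          _ ≤ c * r := mul_le_mul_of_nonneg_left h5 hc.le
      linarith
    -- a dip must occur within time M+1
    have hdip : ∀ a : ℝ, R₁ ≤ a → ∃ t, a < t ∧ t ≤ a + (M + 1) ∧ δ t < 3 * L / 4 := by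
      intro a haR
      by_contra hcon
      push_neg at hcon
      have ha1 : (1:ℝ) ≤ a := hR₁1.trans haR
      have hapos : 0 < a := lt_of_lt_of_le zero_lt_one ha1
      set b := a + (M + 1) with hbdef
      have hab : a ≤ b := by rw [hbdef]; linarith
      have hmono : AntitoneOn (fun t => δ t + t) (Icc a b) := by
        apply antitoneOn_of_deriv_nonpos (convex_Icc a b)
        · intro t ht
          exact ((hδcontAt t (lt_of_lt_of_le hapos ht.1)).add continuousAt_id).continuousWithinAt
        · intro t ht
          rw [interior_Icc] at ht
          exact ((hδdiff t (mem_Ioi.mpr (lt_trans hapos ht.1))).add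
            differentiableAt_id).differentiableWithinAt
        · intro t ht
          rw [interior_Icc] at ht
          have hδt : 3 * L / 4 ≤ δ t := hcon t ht.1 ht.2.le
          have hk := hkey t (haR.trans ht.1.le) (by linarith)
          have hda : DifferentiableAt ℝ δ t := hδdiff t (mem_Ioi.mpr (lt_trans hapos ht.1))
          have hdd : HasDerivAt (fun y => δ y + y) (deriv δ t + 1) t :=
            (hda.hasDerivAt).add (hasDerivAt_id t)
          rw [hdd.deriv]
          linarith
      have h1 := hmono (left_mem_Icc.mpr hab) (right_mem_Icc.mpr hab) hab
      simp only at h1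
      have hδa : δ a < M := lt_of_lt_of_le (hδlt a hapos) (hηle a ha1)
      have hδb : 3 * L / 4 ≤ δ b := hcon b (by rw [hbdef]; linarith) (le_refl b)
      rw [hbdef] at h1
      linarith
    -- final contradiction via a crossing argument
    obtain ⟨r₂, hr₂R, hr₂δ⟩ := hfreq R₁ hR₁1
    obtain ⟨t₁, ht₁gt, ht₁le, ht₁δ⟩ := hdip r₂ hr₂R
    have ht₁pos : 0 < t₁ :=
      lt_trans (lt_of_lt_of_le zero_lt_one (hR₁1.trans hr₂R)) ht₁gt
    obtain ⟨r₃, hr₃ge, hr₃δ⟩ := hfreq (max t₁ 1) (le_max_right _ _)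
    have ht₁r₃ : t₁ < r₃ := by
      rcases lt_or_eq_of_le (le_trans (le_max_left t₁ 1) hr₃ge) with h | h
      · exact h
      · exfalso; rw [← h] at hr₃δ; linarith
    set S := Icc t₁ r₃ ∩ δ ⁻¹' Iic (3 * L / 4) with hSdef
    have hSne : S.Nonempty := ⟨t₁, ⟨le_refl _, ht₁r₃.le⟩, le_of_lt ht₁δ⟩
    have hSbdd : BddAbove S := ⟨r₃, fun x hx => hx.1.2⟩
    have hScl : IsClosed S := by
      apply ContinuousOn.preimage_isClosed_of_isClosed ?_ isClosed_Icc isClosed_Iic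
      exact fun x hx => (hδcontAt x (lt_of_lt_of_le ht₁pos hx.1)).continuousWithinAt
    set s := sSup S with hsdef
    have hsS : s ∈ S := hScl.csSup_mem hSne hSbdd
    have hs1 : t₁ ≤ s := hsS.1.1
    have hsr₃ : s ≤ r₃ := hsS.1.2
    have hsδ : δ s ≤ 3 * L / 4 := hsS.2
    have hslt : s < r₃ := by
      rcases lt_or_eq_of_le hsr₃ with h | h
      · exact h
      · exfalso; rw [h] at hsδ; linarith
    have hspos : 0 < s := lt_of_lt_of_le ht₁pos hs1
    have habove : ∀ t, s < t → t ≤ r₃ → 3 * L / 4 < δ t := by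
      intro t hst htr₃
      by_contra hle
      push_neg at hle
      have ht : t ∈ S := ⟨⟨le_trans hs1 hst.le, htr₃⟩, hle⟩
      exact absurd (le_csSup hSbdd ht) (not_le.mpr hst)
    have hsge : 3 * L / 4 ≤ δ s := by
      have htd : Tendsto δ (𝓝[>] s) (𝓝 (δ s)) :=
        ((hδcontAt s hspos).tendsto).mono_left nhdsWithin_le_nhds
      refine ge_of_tendsto htd ?_
      filter_upwards [Ioo_mem_nhdsGT_of_mem (⟨le_refl s, hslt⟩ : s ∈ Ico s r₃)] with t ht
      exact (habove t ht.1 ht.2.le).le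
    have hsR₁ : R₁ ≤ s := le_trans hr₂R (le_trans ht₁gt.le hs1)
    have hds : deriv δ s ≤ -1 := hkey s hsR₁ (by linarith)
    have hsl := (hδdiff s (mem_Ioi.mpr hspos)).hasDerivAt
    rw [hasDerivAt_iff_tendsto_slope] at hsl
    have hsl' : Tendsto (slope δ s) (𝓝[>] s) (𝓝 (deriv δ s)) :=
      hsl.mono_left (nhdsWithin_mono s (fun x hx => ne_of_gt hx))
    have hneg : ∀ᶠ t in 𝓝[>] s, slope δ s t < 0 :=
      hsl'.eventually_lt_const (by linarith)
    obtain ⟨t, hslope, hts, htr⟩ :=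
      (hneg.and (Ioo_mem_nhdsGT_of_mem (⟨le_refl s, hslt⟩ : s ∈ Ico s r₃))).exists
    rw [slope_def_field] at hslope
    have h6 : δ t < δ s := by
      have h7 : 0 < t - s := by linarith [hts]
      have h10 : (δ t - δ s) / (t - s) * (t - s) < 0 := mul_neg_of_neg_of_pos hslope h7
      rw [div_mul_cancel₀ _ h7.ne'] at h10
      linarith
    have h8 : 3 * L / 4 < δ t := habove t hts htr.le
    linarith
  rw [hLzero] at hηtend hLle hL0
  constructor
  · refine tendsto_of_tendsto_of_tendsto_of_le_of_le' tendsto_const_nhds hηtend ?_ ?_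
    · filter_upwards [eventually_gt_atTop 0] with r hr; exact (hδposIoi r hr).le
    · filter_upwards [eventually_gt_atTop 0] with r hr; exact (hδlt r hr).le
  · exact hηtend
end
end

section
/- Let γ>2, 1<β≤γ, θ>0 and δ_c>0. Then there is no strongly regular solution of the polytropic static system defined on all of [0,∞) with δ(0)=η(0)=δ_c; i.e., the maximal interval of existence of the strongly regular solution with center datum δ_c is bounded. -/
open Real Set Filter Topology

noncomputable section

open MeasureTheory

/-- Young-type inequality: the numerator of `Bfun` is nonnegative. -/
lemma Bfun_num_nonneg {β y : ℝ} (hβ : 1 < β) (hy : 0 < y) :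
    0 ≤ y + (β - 1) * y ^ (1 + β) - β * y ^ β := by
  have hβ0 : (0:ℝ) < β := by linarith
  have key := Real.geom_mean_le_arith_mean2_weighted
    (w₁ := 1/β) (w₂ := (β-1)/β) (p₁ := y) (p₂ := y ^ (1+β))
    (by positivity) (div_nonneg (by linarith) hβ0.le)
    hy.le (by positivity) (by field_simp; ring)
  have h1 : y ^ (1/β) * (y ^ (1+β)) ^ ((β-1)/β) = y ^ β := by
    rw [← Real.rpow_mul hy.le, ← Real.rpow_add hy]
    congr 1
    field_simp
    ring
  rw [h1] at key
  have h2 : β * y ^ β ≤ β * (1/β * y + (β-1)/β * y ^ (1+β)) :=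
    mul_le_mul_of_nonneg_left key hβ0.le
  have h3 : β * (1/β * y + (β-1)/β * y ^ (1+β)) = y + (β-1) * y ^ (1+β) := by
    field_simp
  linarith [h3 ▸ h2]

lemma Bfun_nonneg {β y : ℝ} (hβ : 1 < β) (hy : 0 < y) : 0 ≤ Bfun β y := by
  rw [Bfun, if_neg (ne_of_gt hβ)]
  exact div_nonneg (Bfun_num_nonneg hβ hy) (by nlinarith)

/-- Comparison lemma: a positive function on `[0,R)` with `δ' ≤ -c r δ^{1-q}` forces
`R` to be bounded. -/
lemma boundaryBound {R c q δc : ℝ} {δ : ℝ → ℝ} (hc : 0 < c) (hq : 0 < q) (hδc : 0 < δc)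
    (hcont : ContinuousOn δ (Ico 0 R))
    (hdiff : ∀ r ∈ Ioo 0 R, DifferentiableAt ℝ δ r)
    (hpos : ∀ r ∈ Ico 0 R, 0 < δ r) (h0 : δ 0 = δc)
    (hD : ∀ r ∈ Ioo 0 R, deriv δ r ≤ -(c * r * (δ r) ^ (1-q))) :
    R ≤ Real.sqrt (2 * δc ^ q / (c * q)) := by
  by_contra hcon
  push_neg at hcon
  set M0 := Real.sqrt (2 * δc ^ q / (c * q)) with hM0
  have hM0nn : 0 ≤ M0 := Real.sqrt_nonneg _
  have hR : 0 < R := lt_of_le_of_lt hM0nn hcon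
  set g : ℝ → ℝ := fun r => (δ r) ^ q + c * q * r ^ 2 / 2 with hg
  have hgd : ∀ r ∈ Ioo 0 R, HasDerivAt g (deriv δ r * q * δ r ^ (q-1) + c * q * r) r := by
    intro r hr
    have h1 : HasDerivAt (fun x => (δ x) ^ q) (deriv δ r * q * δ r ^ (q-1)) r :=
      (hdiff r hr).hasDerivAt.rpow_const (Or.inl (hpos r ⟨hr.1.le, hr.2⟩).ne')
    have h2 : HasDerivAt (fun x : ℝ => c * q * x ^ 2 / 2) (c * q * r) r := by
      have := ((hasDerivAt_pow 2 r).const_mul (c * q)).div_const 2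
      simpa using this.congr_deriv (by ring)
    exact h1.add h2
  have hganti : AntitoneOn g (Ico 0 R) := by
    apply antitoneOn_of_deriv_nonpos (convex_Ico 0 R)
    · exact (hcont.rpow_const (fun x hx => Or.inl (hpos x hx).ne')).add
        (by fun_prop)
    · rw [interior_Ico]
      exact fun r hr => ((hgd r hr).differentiableAt).differentiableWithinAt
    · rw [interior_Ico]
      intro r hr
      rw [(hgd r hr).deriv]
      have hdr := hpos r ⟨hr.1.le, hr.2⟩
      have hD' := hD r hr
      have key : deriv δ r * q * δ r ^ (q-1) ≤ -(c * q * r) := by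
        have h3 : deriv δ r * q * δ r ^ (q-1) ≤ -(c * r * δ r ^ (1-q)) * q * δ r ^ (q-1) := by
          have hnn : 0 ≤ q * δ r ^ (q-1) := by positivity
          nlinarith [Real.rpow_pos_of_pos hdr (q-1)]
        have h4 : -(c * r * δ r ^ (1-q)) * q * δ r ^ (q-1) = -(c * q * r) := by
          have h1 : δ r ^ (1-q) * δ r ^ (q-1) = 1 := by
            rw [← Real.rpow_add hdr]; norm_num
          calc -(c * r * δ r ^ (1-q)) * q * δ r ^ (q-1)
              = -(c * q * r) * (δ r ^ (1-q) * δ r ^ (q-1)) := by ring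
            _ = -(c * q * r) := by rw [h1, mul_one]
        linarith [h4 ▸ h3]
      linarith
  set r0 := (M0 + R) / 2 with hr0
  have hr0mem : r0 ∈ Ico 0 R := ⟨by positivity, by rw [hr0]; linarith⟩
  have hle : g r0 ≤ g 0 := hganti (⟨le_rfl, hR⟩) hr0mem (by positivity)
  have hg0 : g 0 = δc ^ q := by simp [hg, h0]
  have hM0r : M0 < r0 := by rw [hr0]; linarith
  have hsq : 2 * δc ^ q / (c * q) < r0 ^ 2 := by
    have := Real.sq_sqrt (by positivity : (0:ℝ) ≤ 2 * δc ^ q / (c * q))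
    nlinarith [hM0r, hM0nn]
  have h5 : δc ^ q < c * q * r0 ^ 2 / 2 := by
    have hcq : 0 < c * q := by positivity
    rw [div_lt_iff₀ hcq] at hsq
    nlinarith
  have h6 : 0 < δ r0 ^ q := Real.rpow_pos_of_pos (hpos r0 hr0mem) q
  rw [hg0] at hle
  simp only [hg] at hle
  linarith

/-- Basic bounds for a regular solution: `δ(r) ≤ η(r) ≤ δ(0)` and the key
differential inequality `δ' ≤ -θ r δ^{2-β} η^{β+1-γ}`. -/
lemma derivBound {γ β θ R : ℝ} {δ η : ℝ → ℝ}
    (hγ : 2 < γ) (hβ : 1 < β) (hβγ : β ≤ γ) (hθ : 0 < θ)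
    (hcont : ContinuousOn δ (Ico 0 R))
    (hdiff : ∀ r ∈ Ioo 0 R, DifferentiableAt ℝ δ r)
    (hpos : ∀ r ∈ Ico 0 R, 0 < δ r)
    (hηeq : ∀ r ∈ Ioo 0 R, η r = polyEta δ r)
    (heq : ∀ r ∈ Ioo 0 R, deriv δ r = polyRHS γ β θ (δ r) (η r) r) :
    ∀ r ∈ Ioo 0 R, δ r ≤ η r ∧ η r ≤ δ 0 ∧
      deriv δ r ≤ -(θ * r * (δ r) ^ (2-β) * (η r) ^ (β+1-γ)) := by
  have hint : ∀ r ∈ Ioo 0 R, IntervalIntegrable (fun s => δ s * s ^ 2) volume 0 r := by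
    intro r hr
    apply ContinuousOn.intervalIntegrable
    rw [uIcc_of_le hr.1.le]
    exact (hcont.mono (fun x hx => ⟨hx.1, lt_of_le_of_lt hx.2 hr.2⟩)).mul
      (continuous_pow 2).continuousOn
  have hηpos : ∀ r ∈ Ioo 0 R, 0 < η r := by
    intro r hr
    rw [hηeq r hr, polyEta]
    have hI : 0 < ∫ s in (0:ℝ)..r, δ s * s ^ 2 := by
      apply intervalIntegral.intervalIntegral_pos_of_pos_on (hint r hr) _ hr.1
      intro x hx
      exact mul_pos (hpos x ⟨hx.1.le, hx.2.trans hr.2⟩) (pow_pos hx.1 2)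
    have : (0:ℝ) < 3 / r ^ 3 := by
      have := hr.1; positivity
    exact mul_pos this hI
  have hderiv_nonpos : ∀ r ∈ Ioo 0 R, deriv δ r ≤ 0 := by
    intro r hr
    rw [heq r hr, polyRHS]
    have hd := hpos r ⟨hr.1.le, hr.2⟩
    have he := hηpos r hr
    have hy : 0 < δ r / η r := div_pos hd he
    have hB := Bfun_nonneg hβ hy
    have h1 : 3 * (β - γ) * Bfun β (δ r / η r) * η r / r ≤ 0 := by
      apply div_nonpos_of_nonpos_of_nonneg _ hr.1.le
      have h0 : β - γ ≤ 0 := by linarith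
      nlinarith [mul_nonneg hB he.le]
    have h2 : 0 < θ * r * η r ^ (2 - γ) * δ r := by
      have h3 : 0 < η r ^ (2-γ) := Real.rpow_pos_of_pos he _
      have := hr.1
      positivity
    apply mul_nonpos_of_nonneg_of_nonpos (Real.rpow_nonneg hy.le _)
    linarith
  have hanti : AntitoneOn δ (Ico 0 R) := by
    apply antitoneOn_of_deriv_nonpos (convex_Ico 0 R) hcont
    · rw [interior_Ico]
      exact fun x hx => (hdiff x hx).differentiableWithinAt
    · rw [interior_Ico]; exact hderiv_nonpos
  intro r hr
  have hd := hpos r ⟨hr.1.le, hr.2⟩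
  have he := hηpos r hr
  have hr0 := hr.1
  have hrmem : r ∈ Ico 0 R := ⟨hr.1.le, hr.2⟩
  have hlow : δ r * (r ^ 3 / 3) ≤ ∫ s in (0:ℝ)..r, δ s * s ^ 2 := by
    have h1 : ∫ s in (0:ℝ)..r, δ r * s ^ 2 = δ r * (r ^ 3 / 3) := by
      rw [intervalIntegral.integral_const_mul, integral_pow]
      norm_num
    rw [← h1]
    apply intervalIntegral.integral_mono_on hr.1.le _ (hint r hr)
    · intro s hs
      have hsm : s ∈ Ico 0 R := ⟨hs.1, lt_of_le_of_lt hs.2 hr.2⟩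
      exact mul_le_mul_of_nonneg_right (hanti hsm hrmem hs.2) (by positivity)
    · apply ContinuousOn.intervalIntegrable
      exact (continuousOn_const.mul (continuous_pow 2).continuousOn)
  have hhigh : (∫ s in (0:ℝ)..r, δ s * s ^ 2) ≤ δ 0 * (r ^ 3 / 3) := by
    have h1 : ∫ s in (0:ℝ)..r, δ 0 * s ^ 2 = δ 0 * (r ^ 3 / 3) := by
      rw [intervalIntegral.integral_const_mul, integral_pow]
      norm_num
    rw [← h1]
    apply intervalIntegral.integral_mono_on hr.1.le (hint r hr)
    · apply ContinuousOn.intervalIntegrable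
      exact (continuousOn_const.mul (continuous_pow 2).continuousOn)
    · intro s hs
      have hsm : s ∈ Ico 0 R := ⟨hs.1, lt_of_le_of_lt hs.2 hr.2⟩
      exact mul_le_mul_of_nonneg_right
        (hanti ⟨le_rfl, lt_of_le_of_lt hr.1.le hr.2⟩ hsm hs.1) (by positivity)
  have hde : δ r ≤ η r := by
    rw [hηeq r hr, polyEta]
    calc δ r = 3 / r ^ 3 * (δ r * (r ^ 3 / 3)) := by field_simp
      _ ≤ 3 / r ^ 3 * ∫ s in (0:ℝ)..r, δ s * s ^ 2 :=
          mul_le_mul_of_nonneg_left hlow (by positivity)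
  have hec : η r ≤ δ 0 := by
    rw [hηeq r hr, polyEta]
    calc 3 / r ^ 3 * ∫ s in (0:ℝ)..r, δ s * s ^ 2
        ≤ 3 / r ^ 3 * (δ 0 * (r ^ 3 / 3)) := mul_le_mul_of_nonneg_left hhigh (by positivity)
      _ = δ 0 := by field_simp
  refine ⟨hde, hec, ?_⟩
  rw [heq r hr, polyRHS]
  have hy : 0 < δ r / η r := div_pos hd he
  have hB := Bfun_nonneg hβ hy
  have h1 : 3 * (β - γ) * Bfun β (δ r / η r) * η r / r ≤ 0 := by
    apply div_nonpos_of_nonpos_of_nonneg _ hr.1.le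
    have h0 : β - γ ≤ 0 := by linarith
    nlinarith [mul_nonneg hB he.le]
  have hyp : 0 < (δ r / η r) ^ (1-β) := Real.rpow_pos_of_pos hy _
  have step1 : (δ r / η r) ^ (1-β) * (3 * (β - γ) * Bfun β (δ r / η r) * η r / r
        - θ * r * η r ^ (2 - γ) * δ r)
      ≤ (δ r / η r) ^ (1-β) * (-(θ * r * η r ^ (2 - γ) * δ r)) := by
    apply mul_le_mul_of_nonneg_left _ hyp.le
    linarith
  have step2 : (δ r / η r) ^ (1-β) * (-(θ * r * η r ^ (2 - γ) * δ r))
      = -(θ * r * (δ r) ^ (2-β) * (η r) ^ (β+1-γ)) := by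
    rw [Real.div_rpow hd.le he.le]
    rw [show (2-β) = (1-β)+1 by ring, Real.rpow_add_one hd.ne']
    rw [show (η r) ^ (β+1-γ) = (η r) ^ (2-γ) / (η r) ^ (1-β) by
      rw [← Real.rpow_sub he]; congr 1; ring]
    rw [div_eq_mul_inv, div_eq_mul_inv]
    ring
  linarith [step2 ▸ step1]

/-- For `γ > 2` and `1 < β ≤ γ` the strongly regular solution with center datum
`δ_c` has bounded maximal interval of existence: there is no global strongly
regular solution, and all strongly regular solutions live on a uniformly bounded
interval. -/
theorem stronglyRegularPoly_Rmax_finite (γ β θ δc : ℝ)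
    (hγ : 2 < γ) (hβ : 1 < β) (hβγ : β ≤ γ) (hθ : 0 < θ) (hδc : 0 < δc) :
    (¬ ∃ δ η : ℝ → ℝ, IsStronglyRegularPolyGlobal γ β θ δ η ∧ δ 0 = δc) ∧
    (∃ M : ℝ, ∀ R : ℝ, ∀ δ η : ℝ → ℝ,
      IsStronglyRegularPoly γ β θ R δ η → δ 0 = δc → R ≤ M) := by
  obtain ⟨M, hM⟩ : ∃ M : ℝ, ∀ R : ℝ, ∀ δ η : ℝ → ℝ,
      IsStronglyRegularPoly γ β θ R δ η → δ 0 = δc → R ≤ M := by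
    rcases le_or_gt γ (β+1) with hcase | hcase
    · -- γ ≤ β + 1 : use δ ≤ η and exponent β+1-γ ≥ 0
      refine ⟨Real.sqrt (2 * δc ^ (γ-2) / (θ * (γ-2))), ?_⟩
      rintro R δ η ⟨⟨hcont, hdiff, _, hpos, _, hηeq, heq⟩, _, _⟩ h0
      apply boundaryBound hθ (by linarith : (0:ℝ) < γ-2) hδc hcont hdiff hpos h0
      intro r hr
      obtain ⟨hde, hec, hder⟩ := derivBound hγ hβ hβγ hθ hcont hdiff hpos hηeq heq r hr
      have hd := hpos r ⟨hr.1.le, hr.2⟩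
      have he : 0 < η r := lt_of_lt_of_le hd hde
      have hexp : (δ r) ^ (β+1-γ) ≤ (η r) ^ (β+1-γ) :=
        Real.rpow_le_rpow hd.le hde (by linarith)
      have hsplit : (δ r) ^ (2-β) * (δ r) ^ (β+1-γ) = (δ r) ^ (1-(γ-2)) := by
        rw [← Real.rpow_add hd]; congr 1; ring
      have h2 : θ * r * (δ r) ^ (2-β) * (δ r) ^ (β+1-γ)
          ≤ θ * r * (δ r) ^ (2-β) * (η r) ^ (β+1-γ) :=
        mul_le_mul_of_nonneg_left hexp
          (mul_nonneg (mul_nonneg hθ.le hr.1.le) (Real.rpow_nonneg hd.le _))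
      have h2' : θ * r * (δ r) ^ (1-(γ-2)) = θ * r * (δ r) ^ (2-β) * (δ r) ^ (β+1-γ) := by
        rw [mul_assoc (θ * r), hsplit]
      calc deriv δ r ≤ -(θ * r * (δ r) ^ (2-β) * (η r) ^ (β+1-γ)) := hder
        _ ≤ -(θ * r * (δ r) ^ (1-(γ-2))) := by rw [h2']; linarith
    · -- β + 1 < γ : use η ≤ δc and negative exponent
      have hK : 0 < θ * δc ^ (β+1-γ) := mul_pos hθ (Real.rpow_pos_of_pos hδc _)
      refine ⟨Real.sqrt (2 * δc ^ (β-1) / ((θ * δc ^ (β+1-γ)) * (β-1))), ?_⟩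
      rintro R δ η ⟨⟨hcont, hdiff, _, hpos, _, hηeq, heq⟩, _, _⟩ h0
      apply boundaryBound hK (by linarith : (0:ℝ) < β-1) hδc hcont hdiff hpos h0
      intro r hr
      obtain ⟨hde, hec, hder⟩ := derivBound hγ hβ hβγ hθ hcont hdiff hpos hηeq heq r hr
      have hd := hpos r ⟨hr.1.le, hr.2⟩
      have he : 0 < η r := lt_of_lt_of_le hd hde
      rw [h0] at hec
      have hexp : δc ^ (β+1-γ) ≤ (η r) ^ (β+1-γ) :=
        Real.rpow_le_rpow_of_nonpos he hec (by linarith)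
      have h2 : θ * r * (δ r) ^ (2-β) * δc ^ (β+1-γ)
          ≤ θ * r * (δ r) ^ (2-β) * (η r) ^ (β+1-γ) := by
        exact mul_le_mul_of_nonneg_left hexp
          (mul_nonneg (mul_nonneg hθ.le hr.1.le) (Real.rpow_nonneg hd.le _))
      have h3 : θ * r * (δ r) ^ (2-β) * δc ^ (β+1-γ)
          = θ * δc ^ (β+1-γ) * r * (δ r) ^ (1-(β-1)) := by
        rw [show (1-(β-1)) = 2-β by ring]; ring
      calc deriv δ r ≤ -(θ * r * (δ r) ^ (2-β) * (η r) ^ (β+1-γ)) := hder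
        _ ≤ -(θ * δc ^ (β+1-γ) * r * (δ r) ^ (1-(β-1))) := by
            rw [← h3]; linarith
  refine ⟨?_, ⟨M, hM⟩⟩
  rintro ⟨δ, η, ⟨⟨h1, h2, h3, h4, h5, h6, h7⟩, h8, h9⟩, h0⟩
  have hMM := hM (M+1) δ η
    ⟨⟨h1.mono (fun x hx => hx.1), fun r hr => h2 r hr.1,
      h3.mono (fun x hx => hx.1), fun r hr => h4 r hr.1, h5,
      fun r hr => h6 r hr.1, fun r hr => h7 r hr.1⟩,
      h8.mono (fun x hx => hx.1), h9⟩ h0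
  linarith
end
end
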